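/- Let d ≥ 3 and 1 ≤ k ≤ ⌈(d−2)/2⌉ be integers and let p be an IDF prime for (d,k). Suppose α, β are rational numbers and n, m ≥ 1 are integers such that f^n_{α,β}(0) = 0 and f^m_{α,β}(1) = 1. Then α ≠ 0 and v_p(α) = 0; in particular α is nonzero modulo p. -/

import Mathlib

open Finset Function

/-- The coefficient `b_i` of `z^(d-i)` in the normalized dynamical Belyi polynomial
`B_{d,k}`. -/
def belyiCoeff (d k i : ℕ) : ℚ :=
  ((-1 : ℚ) ^ (k - i) / ((k - i).factorial * i.factorial)) *
    ∏ j ∈ (Finset.range (k + 1)).erase i, ((d : ℚ) - (j : ℚ))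

/-- The normalized dynamical Belyi polynomial `B_{d,k}` as a function on `ℚ`. -/
def belyi (d k : ℕ) (z : ℚ) : ℚ :=
  ∑ i ∈ Finset.range (k + 1), belyiCoeff d k i * z ^ (d - i)

/-- The map `f_{a,c}(z) = a · B_{d,k}(z) + c`. -/
def belyiMap (d k : ℕ) (a c z : ℚ) : ℚ := a * belyi d k z + c

/-- `p` is an index divisor free (IDF) prime for the pair `(d,k)`:
`p` is a prime with `p > k`, `p ∣ d - r` for some `r ≤ k`, and `r ∤ v_p(d-r)`. -/
def IsIDFPrime (d k p : ℕ) : Prop :=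
  p.Prime ∧ k < p ∧ ∃ r ≤ k, p ∣ (d - r) ∧ ¬ (r ∣ padicValNat p (d - r))

/-- A rational number is `p`-integral if it is zero or has nonnegative `p`-adic valuation. -/
def PIntegral (p : ℕ) (x : ℚ) : Prop := x = 0 ∨ 0 ≤ padicValRat p x


set_option linter.unusedSectionVars false

section AuxUltra
variable {p : ℕ} [hp : Fact p.Prime]

namespace PCFAux

lemma norm_sum_le {ι : Type*} (s : Finset ι) (g : ι → ℚ_[p]) (c : ℝ) (hc : 0 ≤ c)
    (h : ∀ i ∈ s, ‖g i‖ ≤ c) : ‖∑ i ∈ s, g i‖ ≤ c := by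
  classical
  induction s using Finset.cons_induction with
  | empty => simpa using hc
  | cons a s ha ih =>
    rw [Finset.sum_cons]
    refine le_trans (Padic.nonarchimedean _ _) (max_le (h a (by simp)) (ih ?_))
    exact fun i hi => h i (by simp [hi])

lemma norm_sum_lt {ι : Type*} (s : Finset ι) (g : ι → ℚ_[p]) (c : ℝ) (hc : 0 < c)
    (h : ∀ i ∈ s, ‖g i‖ < c) : ‖∑ i ∈ s, g i‖ < c := by
  classical
  induction s using Finset.cons_induction with
  | empty => simpa using hc
  | cons a s ha ih =>
    rw [Finset.sum_cons]
    refine lt_of_le_of_lt (Padic.nonarchimedean _ _) (max_lt (h a (by simp)) (ih ?_))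
    exact fun i hi => h i (by simp [hi])

lemma norm_sum_eq {ι : Type*} [DecidableEq ι] (s : Finset ι) (g : ι → ℚ_[p]) (i₀ : ι)
    (h₀ : i₀ ∈ s) (h : ∀ i ∈ s, i ≠ i₀ → ‖g i‖ < ‖g i₀‖) :
    ‖∑ i ∈ s, g i‖ = ‖g i₀‖ := by
  rw [← Finset.add_sum_erase s g h₀]
  rcases eq_or_ne (∑ i ∈ s.erase i₀, g i) 0 with hz | hz
  · simp [hz]
  obtain ⟨j, hj, hgj⟩ := Finset.exists_ne_zero_of_sum_ne_zero hz
  have hpos : 0 < ‖g i₀‖ :=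
    lt_trans (norm_pos_iff.mpr hgj) (h j (Finset.mem_of_mem_erase hj) (Finset.ne_of_mem_erase hj))
  have hlt : ‖∑ i ∈ s.erase i₀, g i‖ < ‖g i₀‖ := by
    refine norm_sum_lt _ _ _ hpos ?_
    exact fun i hi => h i (Finset.mem_of_mem_erase hi) (Finset.ne_of_mem_erase hi)
  rw [Padic.add_eq_max_of_ne hlt.ne']
  exact max_eq_left hlt.le

end PCFAux

namespace PCFAux2

variable {p : ℕ} [hp : Fact p.Prime]

lemma one_lt_p : (1 : ℝ) < (p : ℝ) := mod_cast hp.out.one_lt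

lemma norm_lt_norm_iff {x y : ℚ_[p]} (hx : x ≠ 0) (hy : y ≠ 0) :
    ‖x‖ < ‖y‖ ↔ y.valuation < x.valuation := by
  rw [Padic.norm_eq_zpow_neg_valuation hx, Padic.norm_eq_zpow_neg_valuation hy,
    (zpow_right_strictMono₀ (one_lt_p (p := p))).lt_iff_lt, neg_lt_neg_iff]

lemma norm_le_norm_iff {x y : ℚ_[p]} (hx : x ≠ 0) (hy : y ≠ 0) :
    ‖x‖ ≤ ‖y‖ ↔ y.valuation ≤ x.valuation := by
  rw [Padic.norm_eq_zpow_neg_valuation hx, Padic.norm_eq_zpow_neg_valuation hy,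
    (zpow_right_strictMono₀ (one_lt_p (p := p))).le_iff_le, neg_le_neg_iff]

lemma valuation_eq_of_norm {x : ℚ_[p]} (hx : x ≠ 0) {v : ℤ} (h : ‖x‖ = (p : ℝ) ^ (-v)) :
    x.valuation = v := by
  rw [Padic.norm_eq_zpow_neg_valuation hx] at h
  have hp1 : (0:ℝ) < (p:ℝ) := lt_trans one_pos (one_lt_p (p := p))
  have := zpow_right_injective₀ hp1 (ne_of_gt (one_lt_p (p := p))) h
  omega

lemma valuation_sum {ι : Type*} [DecidableEq ι] (s : Finset ι) (g : ι → ℚ_[p]) (i₀ : ι)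
    (h₀ : i₀ ∈ s) (hne : g i₀ ≠ 0)
    (h : ∀ i ∈ s, i ≠ i₀ → g i ≠ 0 ∧ (g i₀).valuation < (g i).valuation) :
    (∑ i ∈ s, g i) ≠ 0 ∧ (∑ i ∈ s, g i).valuation = (g i₀).valuation := by
  have hnorm : ‖∑ i ∈ s, g i‖ = ‖g i₀‖ := by
    refine PCFAux.norm_sum_eq s g i₀ h₀ fun i hi hii => ?_
    exact (norm_lt_norm_iff (h i hi hii).1 hne).mpr (h i hi hii).2
  have hns : (∑ i ∈ s, g i) ≠ 0 := by
    intro hzz; rw [hzz] at hnorm; exact hne (by simpa using hnorm.symm)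
  refine ⟨hns, valuation_eq_of_norm hns ?_⟩
  rw [hnorm, Padic.norm_eq_zpow_neg_valuation hne]

lemma valuation_add_left {x y : ℚ_[p]} (hx : x ≠ 0)
    (hy : y = 0 ∨ (y ≠ 0 ∧ x.valuation < y.valuation)) :
    x + y ≠ 0 ∧ (x + y).valuation = x.valuation := by
  rcases hy with rfl | ⟨hy, hv⟩
  · simpa using hx
  have hlt : ‖y‖ < ‖x‖ := (norm_lt_norm_iff hy hx).mpr hv
  have hnorm : ‖x + y‖ = ‖x‖ := by
    rw [Padic.add_eq_max_of_ne hlt.ne']; exact max_eq_left hlt.le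
  have hns : x + y ≠ 0 := by
    intro hzz; rw [hzz] at hnorm; exact hx (by simpa using hnorm.symm)
  exact ⟨hns, valuation_eq_of_norm hns (by rw [hnorm, Padic.norm_eq_zpow_neg_valuation hx])⟩

lemma valuation_div {x y : ℚ_[p]} (hx : x ≠ 0) (hy : y ≠ 0) :
    (x / y).valuation = x.valuation - y.valuation := by
  have h : x / y * y = x := div_mul_cancel₀ x hy
  have hxy : x / y ≠ 0 := div_ne_zero hx hy
  have hm := Padic.valuation_mul (p := p) hxy hy
  rw [h] at hm
  omega

end PCFAux2

end AuxUltra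

section Coeff

variable {p d k r : ℕ} [hp : Fact p.Prime]
variable (hd : 3 ≤ d) (hkd : k + 2 ≤ d) (hkp : k < p) (hrk : r ≤ k)
variable (hpd : p ∣ d - r)

include hkd hkp hrk hpd

lemma not_dvd_sub {j : ℕ} (hj : j ≤ k) (hjr : j ≠ r) : ¬ p ∣ (d - j) := by
  intro hdj
  have h1 : (p : ℤ) ∣ (d : ℤ) - j := by
    have := Int.natCast_dvd_natCast.mpr hdj
    rwa [Nat.cast_sub (by omega)] at this
  have h2 : (p : ℤ) ∣ (d : ℤ) - r := by
    have := Int.natCast_dvd_natCast.mpr hpd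
    rwa [Nat.cast_sub (by omega)] at this
  have h3 : (p : ℤ) ∣ (r : ℤ) - j := by
    have := dvd_sub h1 h2
    simpa [sub_sub_sub_cancel_left] using this
  have hne : (r : ℤ) - j ≠ 0 := by
    intro h; apply hjr; omega
  have h5 : (p : ℤ) ≤ |(r : ℤ) - j| := Int.le_of_dvd (abs_pos.mpr hne) ((dvd_abs _ _).mpr h3)
  have h6 : |(r : ℤ) - j| < p := by
    rw [abs_lt]; omega
  omega

lemma prod_factor_val {i : ℕ} (hi : i ≤ k) :
    padicValRat p (∏ j ∈ (Finset.range (k + 1)).erase i, ((d : ℚ) - (j : ℚ)))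
      = if i = r then 0 else (padicValNat p (d - r) : ℤ) := by
  have hcast : ∀ j ∈ (Finset.range (k + 1)).erase i, ((d : ℚ) - (j : ℚ)) = ((d - j : ℕ) : ℚ) := by
    intro j hj
    have : j ≤ k := by have := Finset.mem_range.mp (Finset.mem_of_mem_erase hj); omega
    push_cast [Nat.cast_sub (by omega : j ≤ d)]
    ring
  rw [Finset.prod_congr rfl hcast, ← Nat.cast_prod, padicValRat.of_nat]
  rw [show (if i = r then (0:ℤ) else (padicValNat p (d - r) : ℤ)) =
    ((if i = r then 0 else padicValNat p (d - r) : ℕ) : ℤ) by split <;> simp]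
  congr 1
  have hne : ∀ j ∈ (Finset.range (k + 1)).erase i, d - j ≠ 0 := by
    intro j hj
    have : j ≤ k := by have := Finset.mem_range.mp (Finset.mem_of_mem_erase hj); omega
    omega
  have hfac := Nat.factorization_prod (S := (Finset.range (k + 1)).erase i)
    (g := fun j => d - j) hne
  have := congrArg (fun f => f p) hfac
  simp only [Finsupp.finset_sum_apply] at this
  rw [Nat.factorization_def _ hp.out] at this
  rw [this]
  have hterm : ∀ j ∈ (Finset.range (k + 1)).erase i, j ≠ r →
      (Nat.factorization (d - j)) p = 0 := by
    intro j hj hjr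
    rw [Nat.factorization_def _ hp.out]
    exact padicValNat.eq_zero_of_not_dvd
      (not_dvd_sub hkd hkp hrk hpd (by have := Finset.mem_range.mp (Finset.mem_of_mem_erase hj); omega) hjr)
  by_cases hir : i = r
  · subst hir
    rw [Finset.sum_eq_zero (fun j hj => hterm j hj (Finset.ne_of_mem_erase hj)), if_pos rfl]
  · rw [Finset.sum_eq_single_of_mem r (Finset.mem_erase_of_ne_of_mem (fun h => hir h.symm)
        (Finset.mem_range.mpr (by omega))) (fun j hj hjr => hterm j hj hjr),
      Nat.factorization_def _ hp.out, if_neg hir]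

end Coeff

section Coeff2

variable {p d k r : ℕ} [hp : Fact p.Prime]
variable (hd : 3 ≤ d) (hkd : k + 2 ≤ d) (hkp : k < p) (hrk : r ≤ k)
variable (hpd : p ∣ d - r)

lemma belyiCoeff_ne_zero {i : ℕ} (hi : i ≤ k) (hkd : k + 2 ≤ d) : belyiCoeff d k i ≠ 0 := by
  unfold belyiCoeff
  apply mul_ne_zero
  · apply div_ne_zero
    · exact pow_ne_zero _ (by norm_num)
    · push_cast
      positivity
  · apply Finset.prod_ne_zero_iff.mpr
    intro j hj
    have : j ≤ k := by have := Finset.mem_range.mp (Finset.mem_of_mem_erase hj); omega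
    have : (j : ℚ) < (d : ℚ) := by exact_mod_cast (by omega : j < d)
    intro h
    rw [sub_eq_zero] at h
    exact absurd h.symm (ne_of_lt this)

include hkd hkp hrk hpd in
lemma belyiCoeff_val {i : ℕ} (hi : i ≤ k) :
    padicValRat p (belyiCoeff d k i) = if i = r then 0 else (padicValNat p (d - r) : ℤ) := by
  unfold belyiCoeff
  have hProdNe : (∏ j ∈ (Finset.range (k + 1)).erase i, ((d : ℚ) - (j : ℚ))) ≠ 0 := by
    apply Finset.prod_ne_zero_iff.mpr
    intro j hj
    have : j ≤ k := by have := Finset.mem_range.mp (Finset.mem_of_mem_erase hj); omega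
    intro h
    rw [sub_eq_zero] at h
    have : (j : ℚ) < (d : ℚ) := by exact_mod_cast (by omega : j < d)
    exact absurd h.symm (ne_of_lt this)
  have hFacNe : (((k - i).factorial : ℚ) * (i.factorial : ℚ)) ≠ 0 := by
    push_cast; positivity
  have hPowNe : ((-1 : ℚ) ^ (k - i)) ≠ 0 := pow_ne_zero _ (by norm_num)
  rw [padicValRat.mul (div_ne_zero hPowNe hFacNe) hProdNe, padicValRat.div hPowNe hFacNe]
  have h1 : padicValRat p ((-1 : ℚ) ^ (k - i)) = 0 := by
    rcases Nat.even_or_odd (k - i) with he | ho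
    · rw [he.neg_one_pow]; exact padicValRat.one
    · rw [ho.neg_one_pow, padicValRat.neg, padicValRat.one]
  have h2 : padicValRat p (((k - i).factorial : ℚ) * (i.factorial : ℚ)) = 0 := by
    rw [padicValRat.mul (by positivity) (by positivity)]
    have hf1 : padicValRat p (((k - i).factorial : ℚ)) = 0 := by
      rw [padicValRat.of_nat, padicValNat.eq_zero_of_not_dvd]
      · simp
      · rw [hp.out.dvd_factorial]; omega
    have hf2 : padicValRat p ((i.factorial : ℚ)) = 0 := by
      rw [padicValRat.of_nat, padicValNat.eq_zero_of_not_dvd]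
      · simp
      · rw [hp.out.dvd_factorial]; omega
    rw [hf1, hf2]; ring
  rw [h1, h2, prod_factor_val hkd hkp hrk hpd hi]
  ring

end Coeff2


section BVal

variable {p d k r : ℕ} [hp : Fact p.Prime]

/-- The coefficients of `B` inside `ℚ_[p]`. -/
noncomputable def bco (p d k : ℕ) [Fact p.Prime] (i : ℕ) : ℚ_[p] := ((belyiCoeff d k i : ℚ) : ℚ_[p])

/-- The Belyi polynomial inside `ℚ_[p]`. -/
noncomputable def BK (p d k : ℕ) [Fact p.Prime] (z : ℚ_[p]) : ℚ_[p] :=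
  ∑ i ∈ Finset.range (k + 1), bco p d k i * z ^ (d - i)

lemma val_pow (z : ℚ_[p]) (hz : z ≠ 0) (n : ℕ) :
    (z ^ n).valuation = n * z.valuation := by
  induction n with
  | zero => simp
  | succ t ih =>
    rw [pow_succ, Padic.valuation_mul (pow_ne_zero _ hz) hz, ih]
    push_cast; ring

variable (hkd : k + 2 ≤ d) (hkp : k < p) (hrk : r ≤ k) (hpd : p ∣ d - r)

include hkd hkp hrk hpd

lemma bco_ne_zero {i : ℕ} (hi : i ≤ k) : bco p d k i ≠ 0 := by
  simpa [bco] using belyiCoeff_ne_zero hi hkd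

lemma bco_val {i : ℕ} (hi : i ≤ k) :
    (bco p d k i).valuation = if i = r then 0 else (padicValNat p (d - r) : ℤ) := by
  rw [bco, Padic.valuation_ratCast, belyiCoeff_val hkd hkp hrk hpd hi]

lemma term_val {i : ℕ} (hi : i ≤ k) {z : ℚ_[p]} (hz : z ≠ 0) :
    bco p d k i * z ^ (d - i) ≠ 0 ∧
    (bco p d k i * z ^ (d - i)).valuation =
      (if i = r then 0 else (padicValNat p (d - r) : ℤ)) + (d - i : ℕ) * z.valuation := by
  refine ⟨mul_ne_zero (bco_ne_zero hkd hkp hrk hpd hi) (pow_ne_zero _ hz), ?_⟩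
  rw [Padic.valuation_mul (bco_ne_zero hkd hkp hrk hpd hi) (pow_ne_zero _ hz),
    val_pow z hz, bco_val hkd hkp hrk hpd hi]

lemma E_pos : 1 ≤ padicValNat p (d - r) :=
  one_le_padicValNat_of_dvd (by omega) hpd

/-- Valuation of `B(z)` for `z` a unit. -/
lemma BK_val_unit {z : ℚ_[p]} (hz : z ≠ 0) (hv : z.valuation = 0) :
    BK p d k z ≠ 0 ∧ (BK p d k z).valuation = 0 := by
  have hE := E_pos hkd hkp hrk hpd
  have h := PCFAux2.valuation_sum (Finset.range (k + 1)) (fun i => bco p d k i * z ^ (d - i)) r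
    (Finset.mem_range.mpr (by omega)) (term_val hkd hkp hrk hpd hrk hz).1 ?_
  · rw [BK]
    refine ⟨h.1, ?_⟩
    rw [h.2, (term_val hkd hkp hrk hpd hrk hz).2, if_pos rfl, hv]
    ring
  · intro i hi hir
    have hik : i ≤ k := by have := Finset.mem_range.mp hi; omega
    refine ⟨(term_val hkd hkp hrk hpd hik hz).1, ?_⟩
    rw [(term_val hkd hkp hrk hpd hik hz).2, (term_val hkd hkp hrk hpd hrk hz).2,
      if_pos rfl, if_neg hir, hv]
    have : (1 : ℤ) ≤ (padicValNat p (d - r) : ℤ) := by exact_mod_cast hE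
    omega

variable (hnd : ¬ r ∣ padicValNat p (d - r))
include hnd

/-- Valuation of `B(z)` for `z` of negative valuation: the key exactness lemma. -/
lemma BK_val_neg {z : ℚ_[p]} (hz : z ≠ 0) (hv : z.valuation < 0) :
    BK p d k z ≠ 0 ∧ (BK p d k z).valuation =
      (d : ℤ) * z.valuation + min ((padicValNat p (d - r) : ℤ)) ((r : ℤ) * (-z.valuation)) := by
  have hE := E_pos hkd hkp hrk hpd
  set E : ℤ := (padicValNat p (d - r) : ℤ) with hEdef
  have hE1 : 1 ≤ E := by rw [hEdef]; exact_mod_cast hE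
  set m := z.valuation with hm
  set m' : ℤ := -m with hm'
  have hm'1 : 1 ≤ m' := by omega
  have hneq : (r : ℤ) * m' ≠ E := by
    intro h
    apply hnd
    have : (r : ℤ) ∣ E := ⟨m', h.symm⟩
    rw [hEdef] at this
    exact_mod_cast this
  -- the dominant index
  rcases lt_or_gt_of_ne hneq with hcase | hcase
  · -- dominant index is `r`
    have h := PCFAux2.valuation_sum (Finset.range (k + 1)) (fun i => bco p d k i * z ^ (d - i)) r
      (Finset.mem_range.mpr (by omega)) (term_val hkd hkp hrk hpd hrk hz).1 ?_
    · rw [BK]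
      refine ⟨h.1, ?_⟩
      rw [h.2, (term_val hkd hkp hrk hpd hrk hz).2, if_pos rfl,
        min_eq_right hcase.le]
      have hcast : ((d - r : ℕ) : ℤ) = (d : ℤ) - r := by omega
      rw [hcast]; ring
    · intro i hi hir
      have hik : i ≤ k := by have := Finset.mem_range.mp hi; omega
      refine ⟨(term_val hkd hkp hrk hpd hik hz).1, ?_⟩
      rw [(term_val hkd hkp hrk hpd hik hz).2, (term_val hkd hkp hrk hpd hrk hz).2,
        if_pos rfl, if_neg hir]
      have hcast : ((d - r : ℕ) : ℤ) = (d : ℤ) - r := by omega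
      have hcast2 : ((d - i : ℕ) : ℤ) = (d : ℤ) - i := by omega
      rw [hcast, hcast2]
      have him' : 0 ≤ (i : ℤ) * m' := mul_nonneg (by positivity) (by omega)
      nlinarith [him', hcase]
  · -- dominant index is `0`
    have hr1 : 1 ≤ r := by
      by_contra hr0
      have : r = 0 := by omega
      subst this
      simp at hcase; omega
    have h := PCFAux2.valuation_sum (Finset.range (k + 1)) (fun i => bco p d k i * z ^ (d - i)) 0
      (Finset.mem_range.mpr (by omega)) (term_val hkd hkp hrk hpd (by omega) hz).1 ?_
    · rw [BK]
      refine ⟨h.1, ?_⟩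
      rw [h.2, (term_val hkd hkp hrk hpd (by omega) hz).2, if_neg (by omega),
        min_eq_left hcase.le]
      simp only [Nat.sub_zero]
      ring
    · intro i hi hir
      have hik : i ≤ k := by have := Finset.mem_range.mp hi; omega
      refine ⟨(term_val hkd hkp hrk hpd hik hz).1, ?_⟩
      rw [(term_val hkd hkp hrk hpd hik hz).2, (term_val hkd hkp hrk hpd (by omega) hz).2,
        if_neg (by omega)]
      simp only [Nat.sub_zero]
      have hcast2 : ((d - i : ℕ) : ℤ) = (d : ℤ) - i := by omega
      rw [hcast2]
      by_cases hirr : i = r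
      · subst hirr
        rw [if_pos rfl]
        nlinarith [hcase]
      · rw [if_neg hirr]
        have hi1 : 1 ≤ i := by omega
        nlinarith [mul_pos (show (0:ℤ) < i by exact_mod_cast hi1) (show (0:ℤ) < m' by omega)]

end BVal


section PolyMap

variable {p d k : ℕ} [hp : Fact p.Prime]

/-- A generic polynomial map of the same shape as `f_{a,c}`. -/
noncomputable def polyMap (p d k : ℕ) [Fact p.Prime] (co : ℕ → ℚ_[p]) (C : ℚ_[p])
    (z : ℚ_[p]) : ℚ_[p] :=
  ∑ i ∈ Finset.range (k + 1), co i * z ^ (d - i) + C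

lemma polyMap_at_zero (co : ℕ → ℚ_[p]) (C : ℚ_[p]) (hkd : k + 2 ≤ d) :
    polyMap p d k co C 0 = C := by
  rw [polyMap, Finset.sum_eq_zero, zero_add]
  intro i hi
  have : d - i ≠ 0 := by have := Finset.mem_range.mp hi; omega
  simp [zero_pow this]

lemma norm_pow_sub_pow (x y : ℚ_[p]) (hx : ‖x‖ ≤ 1) (hy : ‖y‖ ≤ 1) (j : ℕ) :
    ‖x ^ j - y ^ j‖ ≤ ‖x - y‖ := by
  rw [← geom_sum₂_mul x y j, norm_mul]
  have h1 : ‖∑ i ∈ Finset.range j, x ^ i * y ^ (j - 1 - i)‖ ≤ 1 := by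
    refine PCFAux.norm_sum_le _ _ _ zero_le_one fun i hi => ?_
    rw [norm_mul, norm_pow, norm_pow]
    exact mul_le_one₀ (pow_le_one₀ (norm_nonneg _) hx) (by positivity)
      (pow_le_one₀ (norm_nonneg _) hy)
  calc ‖∑ i ∈ Finset.range j, x ^ i * y ^ (j - 1 - i)‖ * ‖x - y‖
      ≤ 1 * ‖x - y‖ := by gcongr
    _ = ‖x - y‖ := one_mul _

lemma polyMap_lip (co : ℕ → ℚ_[p]) (C : ℚ_[p]) (hco : ∀ i ≤ k, ‖co i‖ ≤ 1)
    {x y : ℚ_[p]} (hx : ‖x‖ ≤ 1) (hy : ‖y‖ ≤ 1) :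
    ‖polyMap p d k co C x - polyMap p d k co C y‖ ≤ ‖x - y‖ := by
  rw [polyMap, polyMap, add_sub_add_right_eq_sub, ← Finset.sum_sub_distrib]
  refine PCFAux.norm_sum_le _ _ _ (norm_nonneg _) fun i hi => ?_
  rw [← mul_sub, norm_mul]
  calc ‖co i‖ * ‖x ^ (d - i) - y ^ (d - i)‖ ≤ 1 * ‖x - y‖ := by
        refine mul_le_mul (hco i (by have := Finset.mem_range.mp hi; omega))
          (norm_pow_sub_pow x y hx hy _) (norm_nonneg _) zero_le_one
    _ = ‖x - y‖ := one_mul _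

lemma polyMap_norm_le (co : ℕ → ℚ_[p]) (C : ℚ_[p]) (hco : ∀ i ≤ k, ‖co i‖ ≤ 1)
    (hC : ‖C‖ ≤ 1) {x : ℚ_[p]} (hx : ‖x‖ ≤ 1) : ‖polyMap p d k co C x‖ ≤ 1 := by
  rw [polyMap]
  refine le_trans (Padic.nonarchimedean _ _) (max_le ?_ hC)
  refine PCFAux.norm_sum_le _ _ _ zero_le_one fun i hi => ?_
  rw [norm_mul, norm_pow]
  exact mul_le_one₀ (hco i (by have := Finset.mem_range.mp hi; omega)) (by positivity)
    (pow_le_one₀ (norm_nonneg _) hx)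

lemma polyMap_iter_lip (co : ℕ → ℚ_[p]) (C : ℚ_[p]) (hco : ∀ i ≤ k, ‖co i‖ ≤ 1)
    (hC : ‖C‖ ≤ 1) (N : ℕ) {x y : ℚ_[p]} (hx : ‖x‖ ≤ 1) (hy : ‖y‖ ≤ 1) :
    ‖(polyMap p d k co C)^[N] x - (polyMap p d k co C)^[N] y‖ ≤ ‖x - y‖ := by
  induction N generalizing x y with
  | zero => simp
  | succ t ih =>
    rw [Function.iterate_succ_apply, Function.iterate_succ_apply]
    exact le_trans (ih (polyMap_norm_le co C hco hC hx) (polyMap_norm_le co C hco hC hy))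
      (polyMap_lip co C hco hx hy)

lemma no_two_periodic (co : ℕ → ℚ_[p]) (C : ℚ_[p]) (hco : ∀ i ≤ k, ‖co i‖ ≤ 1)
    (hC : ‖C‖ ≤ 1) {x y : ℚ_[p]} (hx : ‖x‖ ≤ 1) (hy : ‖y‖ ≤ 1)
    {N : ℕ} (hN : 1 ≤ N) (hGx : (polyMap p d k co C)^[N] x = x)
    (hGy : (polyMap p d k co C)^[N] y = y)
    (hstrict : ‖polyMap p d k co C x - polyMap p d k co C y‖ < ‖x - y‖) : False := by
  obtain ⟨N', rfl⟩ : ∃ N', N = N' + 1 := ⟨N - 1, by omega⟩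
  have hxy : ‖x - y‖ ≤ ‖polyMap p d k co C x - polyMap p d k co C y‖ := by
    conv_lhs => rw [← hGx, ← hGy]
    rw [Function.iterate_succ_apply, Function.iterate_succ_apply]
    exact polyMap_iter_lip co C hco hC N'
      (polyMap_norm_le co C hco hC hx) (polyMap_norm_le co C hco hC hy)
  exact absurd hxy (not_le.mpr hstrict)

lemma polyMap_conj (co : ℕ → ℚ_[p]) (C : ℚ_[p]) (c : ℚ_[p]) (hc : c ≠ 0)
    (hkd : k + 2 ≤ d) (z : ℚ_[p]) :
    c * polyMap p d k co C (z / c)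
      = polyMap p d k (fun i => co i / c ^ (d - i - 1)) (c * C) z := by
  rw [polyMap, polyMap, mul_add, Finset.mul_sum]
  congr 1
  refine Finset.sum_congr rfl fun i hi => ?_
  have hd2 : 2 ≤ d - i := by have := Finset.mem_range.mp hi; omega
  rw [div_pow, show d - i = (d - i - 1) + 1 by omega, pow_succ]
  field_simp
  rw [Nat.add_sub_cancel]
  ring

end PolyMap


set_option maxHeartbeats 1000000 in
/-- (Lemma: `v_p(α) = 0`.)  If both critical points `0` and `1` are
periodic for `f_{α,β}`, then `α` is nonzero with `v_p(α) = 0`; in particular `α` is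
nonzero modulo `p`. -/
theorem padicValRat_eq_zero_of_pcf (d k p : ℕ) (hd : 3 ≤ d) (hk1 : 1 ≤ k)
    (hk2 : k ≤ (d - 1) / 2) (hp : IsIDFPrime d k p)
    (α β : ℚ) (n m : ℕ) (hn : 1 ≤ n) (hm : 1 ≤ m)
    (h0 : (belyiMap d k α β)^[n] 0 = 0) (h1 : (belyiMap d k α β)^[m] 1 = 1) :
    α ≠ 0 ∧ padicValRat p α = 0 := by
  obtain ⟨hpp, hkp, r, hrk, hpd, hnd⟩ := hp
  haveI hfact : Fact p.Prime := ⟨hpp⟩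
  have hkd : k + 2 ≤ d := by omega
  -- α is nonzero
  have hα : α ≠ 0 := by
    rintro rfl
    have hconst : ∀ z, belyiMap d k 0 β z = β := by
      intro z; simp [belyiMap]
    have e0 : (belyiMap d k 0 β)^[n] 0 = β := by
      obtain ⟨n', rfl⟩ : ∃ n', n = n' + 1 := ⟨n - 1, by omega⟩
      rw [Function.iterate_succ_apply', hconst]
    have e1 : (belyiMap d k 0 β)^[m] 1 = β := by
      obtain ⟨m', rfl⟩ : ∃ m', m = m' + 1 := ⟨m - 1, by omega⟩
      rw [Function.iterate_succ_apply', hconst]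
    rw [h0] at e0
    rw [h1] at e1
    rw [← e0] at e1
    norm_num at e1
  refine ⟨hα, ?_⟩
  -- move to `ℚ_[p]`
  set A : ℚ_[p] := ((α : ℚ) : ℚ_[p]) with hA
  set C : ℚ_[p] := ((β : ℚ) : ℚ_[p]) with hCdef
  have hA0 : A ≠ 0 := by
    rw [hA]; exact_mod_cast hα
  set f : ℚ_[p] → ℚ_[p] := polyMap p d k (fun i => A * bco p d k i) C with hf
  have hfBK : ∀ z, f z = A * BK p d k z + C := by
    intro z
    rw [hf, polyMap, BK, Finset.mul_sum]
    simp [mul_assoc]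
  have hsemi : ∀ x : ℚ, ((belyiMap d k α β x : ℚ) : ℚ_[p]) = f ((x : ℚ) : ℚ_[p]) := by
    intro x
    rw [hfBK, belyiMap, belyi, BK]
    push_cast
    rfl
  have hiter : ∀ (t : ℕ) (x : ℚ), (((belyiMap d k α β)^[t] x : ℚ) : ℚ_[p]) = f^[t] ((x : ℚ) : ℚ_[p]) := by
    intro t
    induction t with
    | zero => intro x; simp
    | succ s ih =>
      intro x
      rw [Function.iterate_succ_apply, Function.iterate_succ_apply, ← hsemi, ih]
  have hit0 : f^[n] 0 = 0 := by
    have := hiter n 0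
    rw [h0] at this
    simpa using this.symm
  have hit1 : f^[m] 1 = 1 := by
    have := hiter m 1
    rw [h1] at this
    simpa using this.symm
  -- periodicity for multiples
  have hit0N : ∀ j : ℕ, f^[n * j] 0 = 0 := by
    intro j
    induction j with
    | zero => simp
    | succ s ih => rw [mul_add, mul_one, Function.iterate_add_apply, hit0, ih]
  have hit1N : ∀ j : ℕ, f^[m * j] 1 = 1 := by
    intro j
    induction j with
    | zero => simp
    | succ s ih => rw [mul_add, mul_one, Function.iterate_add_apply, hit1, ih]
  have hf0 : f 0 = C := polyMap_at_zero _ _ hkd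
  rw [← Padic.valuation_ratCast (p := p), ← hA]
  set v : ℤ := A.valuation with hv
  set E : ℤ := (padicValNat p (d - r) : ℤ) with hE
  have hE1 : (1 : ℤ) ≤ E := by
    rw [hE]; exact_mod_cast E_pos hkd hkp hrk hpd
  rcases lt_trichotomy v 0 with hvneg | hvzero | hvpos
  · -- Case v < 0 : impossible
    exfalso
    classical
    set S : Finset ℚ_[p] :=
      ((Finset.range n).image fun t => f^[t] 0) ∪ ((Finset.range m).image fun t => f^[t] 1) with hS
    have hmemS : ∀ z ∈ S, f z ∈ S := by
      intro z hz
      simp only [hS, Finset.mem_union, Finset.mem_image, Finset.mem_range] at hz ⊢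
      rcases hz with ⟨t, ht, rfl⟩ | ⟨t, ht, rfl⟩
      · left
        rcases Nat.lt_or_ge (t + 1) n with h | h
        · exact ⟨t + 1, h, Function.iterate_succ_apply' f t 0⟩
        · have htn : t + 1 = n := by omega
          refine ⟨0, by omega, ?_⟩
          have hper : f^[t + 1] 0 = 0 := by rw [htn, hit0]
          rw [Function.iterate_zero_apply, ← Function.iterate_succ_apply' f t 0]
          exact hper.symm
      · right
        rcases Nat.lt_or_ge (t + 1) m with h | h
        · exact ⟨t + 1, h, Function.iterate_succ_apply' f t 1⟩
        · have htn : t + 1 = m := by omega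
          refine ⟨0, by omega, ?_⟩
          have hper : f^[t + 1] 1 = 1 := by rw [htn, hit1]
          rw [Function.iterate_zero_apply, ← Function.iterate_succ_apply' f t 1]
          exact hper.symm
    have h0S : (0 : ℚ_[p]) ∈ S := by
      simp only [hS, Finset.mem_union, Finset.mem_image, Finset.mem_range]
      exact Or.inl ⟨0, by omega, by simp⟩
    have h1S : (1 : ℚ_[p]) ∈ S := by
      simp only [hS, Finset.mem_union, Finset.mem_image, Finset.mem_range]
      exact Or.inr ⟨0, by omega, by simp⟩
    have hCS : C ∈ S := by
      have := hmemS 0 h0S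
      rwa [hf0] at this
    set T : Finset ℚ_[p] := S.filter (· ≠ 0) with hT
    have h1T : (1 : ℚ_[p]) ∈ T := Finset.mem_filter.mpr ⟨h1S, one_ne_zero⟩
    have hTne : T.Nonempty := ⟨1, h1T⟩
    set μ : ℤ := T.inf' hTne Padic.valuation with hμ
    have hμle : ∀ x ∈ T, μ ≤ x.valuation := fun x hx => Finset.inf'_le _ hx
    have hμ0 : μ ≤ 0 := by
      have := hμle 1 h1T
      rwa [Padic.valuation_one] at this
    have hfinal : ∀ z, z ∈ T → A * BK p d k z ≠ 0 →
        (A * BK p d k z).valuation < μ → False := by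
      intro z hzT hprod hval
      have hCcase : C = 0 ∨ (C ≠ 0 ∧ (A * BK p d k z).valuation < C.valuation) := by
        by_cases hC0 : C = 0
        · exact Or.inl hC0
        · exact Or.inr ⟨hC0, lt_of_lt_of_le hval
            (hμle C (Finset.mem_filter.mpr ⟨hCS, hC0⟩))⟩
      have hfz := PCFAux2.valuation_add_left hprod hCcase
      have hfzT : f z ∈ T := Finset.mem_filter.mpr
        ⟨hmemS z (Finset.mem_filter.mp hzT).1, by rw [hfBK]; exact hfz.1⟩
      have := hμle (f z) hfzT
      rw [hfBK z, hfz.2] at this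
      omega
    rcases lt_or_eq_of_le hμ0 with hμneg | hμzero
    · -- μ < 0 : minimal point escapes downwards
      obtain ⟨z, hzT, hzval⟩ := Finset.exists_mem_eq_inf' hTne Padic.valuation
      have hz0 : z ≠ 0 := (Finset.mem_filter.mp hzT).2
      have hzμ : z.valuation = μ := by rw [hμ, ← hzval]
      have hBK := BK_val_neg hkd hkp hrk hpd hnd hz0 (by omega)
      refine hfinal z hzT (mul_ne_zero hA0 hBK.1) ?_
      rw [Padic.valuation_mul hA0 hBK.1, hBK.2, hzμ, ← hv, ← hE]
      have hmin : min E ((r : ℤ) * (-μ)) ≤ (r : ℤ) * (-μ) := min_le_right _ _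
      have hdr : (2 : ℤ) ≤ (d : ℤ) - r := by
        have : r ≤ k := hrk; omega
      have h2 : (d : ℤ) * μ - (r : ℤ) * μ ≤ 2 * μ := by nlinarith
      have : (d : ℤ) * μ + (r : ℤ) * (-μ) ≤ 2 * μ := by linarith
      omega
    · -- μ = 0 : the point 1 escapes downwards
      have hBK := BK_val_unit hkd hkp hrk hpd (z := 1) one_ne_zero Padic.valuation_one
      refine hfinal 1 h1T (mul_ne_zero hA0 hBK.1) ?_
      rw [Padic.valuation_mul hA0 hBK.1, hBK.2, ← hv]
      omega

  · exact hvzero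
  · -- Case v > 0 : impossible
    exfalso
    by_cases hCle : ‖C‖ ≤ 1
    · -- contraction with the two periodic points 0 and 1
      have hco : ∀ i ≤ k, ‖A * bco p d k i‖ ≤ 1 := by
        intro i hi
        rw [Padic.norm_le_one_iff_val_nonneg,
          Padic.valuation_mul hA0 (bco_ne_zero hkd hkp hrk hpd hi),
          bco_val hkd hkp hrk hpd hi]
        rw [← hv, ← hE]
        split_ifs <;> omega
      have hBK1 := BK_val_unit hkd hkp hrk hpd (z := 1) one_ne_zero Padic.valuation_one
      have hstrict : ‖f 0 - f 1‖ < ‖(0 : ℚ_[p]) - 1‖ := by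
        rw [hf0, hfBK 1, show C - (A * BK p d k 1 + C) = -(A * BK p d k 1) by ring,
          norm_neg, norm_mul]
        have hB1 : ‖BK p d k 1‖ = 1 := by
          rw [Padic.norm_eq_zpow_neg_valuation hBK1.1, hBK1.2]
          norm_num
        have hA1 : ‖A‖ < 1 := by
          rw [Padic.norm_eq_zpow_neg_valuation hA0]
          have h := (zpow_right_strictMono₀ (PCFAux2.one_lt_p (p := p)))
            (show -A.valuation < 0 by omega)
          simpa using h
        rw [hB1, mul_one, zero_sub, norm_neg, norm_one]
        exact hA1
      have hN : 1 ≤ n * m := Nat.mul_pos hn hm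
      have hGx : (polyMap p d k (fun i => A * bco p d k i) C)^[n * m] 0 = 0 := by
        rw [← hf]; exact hit0N m
      have hGy : (polyMap p d k (fun i => A * bco p d k i) C)^[n * m] 1 = 1 := by
        rw [← hf, mul_comm]; exact hit1N n
      refine no_two_periodic _ _ hco hCle (x := 0) (y := 1) (by norm_num) (by norm_num)
        hN hGx hGy ?_
      rw [← hf]
      exact hstrict

    · -- `β` has negative valuation
      have hC0 : C ≠ 0 := by
        intro h
        rw [h] at hCle
        simp at hCle
      have hw : C.valuation < 0 := by
        by_contra h
        exact hCle ((Padic.norm_le_one_iff_val_nonneg C).mpr (by omega))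
      set w : ℤ := C.valuation with hwdef
      by_cases hall : ∀ i ∈ Finset.range (k + 1),
          ((d - i - 1 : ℕ) : ℤ) * (-w) ≤ v + (if i = r then 0 else E)
      · -- conjugation and contraction
        set c : ℚ_[p] := (p : ℚ_[p]) ^ (-w).toNat with hc
        have hpne : (p : ℚ_[p]) ≠ 0 := Nat.cast_ne_zero.mpr hpp.ne_zero
        have hc0 : c ≠ 0 := pow_ne_zero _ hpne
        have hcval : c.valuation = -w := by
          rw [hc, val_pow _ hpne, Padic.valuation_p, mul_one, Int.toNat_of_nonneg (by omega)]
        set co' : ℕ → ℚ_[p] := fun i => (A * bco p d k i) / c ^ (d - i - 1) with hco'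
        have hcoef : ∀ i ≤ k, ‖co' i‖ ≤ 1 := by
          intro i hi
          have hbne := bco_ne_zero hkd hkp hrk hpd hi
          have hterm : A * bco p d k i ≠ 0 := mul_ne_zero hA0 hbne
          have hcp : c ^ (d - i - 1) ≠ 0 := pow_ne_zero _ hc0
          rw [hco', Padic.norm_le_one_iff_val_nonneg,
            PCFAux2.valuation_div hterm hcp,
            Padic.valuation_mul hA0 hbne, bco_val hkd hkp hrk hpd hi,
            val_pow _ hc0, hcval, ← hv, ← hE]
          have := hall i (Finset.mem_range.mpr (by omega))
          omega
        have hC' : ‖c * C‖ ≤ 1 := by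
          rw [Padic.norm_le_one_iff_val_nonneg, Padic.valuation_mul hc0 hC0, hcval]
          omega
        have hconj : ∀ z, polyMap p d k co' (c * C) z = c * f (z / c) := by
          intro z
          rw [hf, polyMap_conj _ _ c hc0 hkd z, hco']
        have hGiter : ∀ (t : ℕ) (z : ℚ_[p]),
            (polyMap p d k co' (c * C))^[t] z = c * f^[t] (z / c) := by
          intro t
          induction t with
          | zero =>
            intro z
            rw [Function.iterate_zero_apply, Function.iterate_zero_apply,
              mul_div_cancel₀ _ hc0]
          | succ s ih =>
            intro z
            rw [Function.iterate_succ_apply, ih, hconj, mul_div_cancel_left₀ _ hc0,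
              ← Function.iterate_succ_apply]
        have hGx : (polyMap p d k co' (c * C))^[n * m] 0 = 0 := by
          rw [hGiter, zero_div, hit0N m, mul_zero]
        have hGy : (polyMap p d k co' (c * C))^[n * m] c = c := by
          rw [hGiter, div_self hc0, mul_comm n m, hit1N n, mul_one]
        have hcn : ‖c‖ = (p : ℝ) ^ (w : ℤ) := by
          rw [Padic.norm_eq_zpow_neg_valuation hc0, hcval, neg_neg]
        have hcpos : 0 < ‖c‖ := norm_pos_iff.mpr hc0
        have hclt : ‖c‖ < 1 := by
          rw [hcn]
          have h := (zpow_right_strictMono₀ (PCFAux2.one_lt_p (p := p))) (show w < 0 by omega)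
          simpa using h
        have hstrict : ‖polyMap p d k co' (c * C) 0 - polyMap p d k co' (c * C) c‖
            < ‖(0 : ℚ_[p]) - c‖ := by
          rw [polyMap_at_zero co' (c * C) hkd]
          have hGc : polyMap p d k co' (c * C) c
              = (∑ i ∈ Finset.range (k + 1), co' i * c ^ (d - i)) + c * C := rfl
          rw [hGc, show c * C - ((∑ i ∈ Finset.range (k + 1), co' i * c ^ (d - i)) + c * C)
            = -(∑ i ∈ Finset.range (k + 1), co' i * c ^ (d - i)) by ring, norm_neg]
          have hsum : ‖∑ i ∈ Finset.range (k + 1), co' i * c ^ (d - i)‖ ≤ ‖c‖ ^ 2 := by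
            refine PCFAux.norm_sum_le _ _ _ (by positivity) fun i hi => ?_
            have hik : i ≤ k := by have := Finset.mem_range.mp hi; omega
            rw [norm_mul, norm_pow]
            calc ‖co' i‖ * ‖c‖ ^ (d - i) ≤ 1 * ‖c‖ ^ (d - i) := by
                  exact mul_le_mul_of_nonneg_right (hcoef i hik) (by positivity)
              _ = ‖c‖ ^ (d - i) := one_mul _
              _ ≤ ‖c‖ ^ 2 := pow_le_pow_of_le_one hcpos.le hclt.le (by omega)
          have h2 : ‖c‖ ^ 2 < ‖c‖ := by
            calc ‖c‖ ^ 2 = ‖c‖ * ‖c‖ := sq ‖c‖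
              _ < 1 * ‖c‖ := by exact mul_lt_mul_of_pos_right hclt hcpos
              _ = ‖c‖ := one_mul _
          rw [zero_sub, norm_neg]
          exact lt_of_le_of_lt hsum h2
        exact no_two_periodic co' (c * C) hcoef hC' (by norm_num) hclt.le
          (Nat.mul_pos hn hm) hGx hGy hstrict
      · -- escape to infinity along the orbit of 0
        push_neg at hall
        obtain ⟨i₀, hi₀, hlt⟩ := hall
        have hi₀k : i₀ ≤ k := by have := Finset.mem_range.mp hi₀; omega
        have hcast : ((d - i₀ - 1 : ℕ) : ℤ) = (d : ℤ) - i₀ - 1 := by omega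
        rw [hcast] at hlt
        have hGw : v + (d : ℤ) * w + min E ((r : ℤ) * (-w)) < w := by
          have hmin : min E ((r : ℤ) * (-w)) ≤ (if i₀ = r then (0:ℤ) else E) + (i₀ : ℤ) * (-w) := by
            by_cases h : i₀ = r
            · subst h
              rw [if_pos rfl, zero_add]
              exact min_le_right _ _
            · rw [if_neg h]
              have h1 : (0:ℤ) ≤ (i₀ : ℤ) * (-w) := mul_nonneg (by positivity) (by omega)
              have h2 := min_le_left E ((r : ℤ) * (-w))
              linarith
          have hkey : ((d:ℤ) - i₀ - 1) * (-w) + ((d:ℤ) - i₀) * w = w := by ring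
          have hkey2 : (d:ℤ) * w + (i₀ : ℤ) * (-w) = ((d:ℤ) - i₀) * w := by ring
          linarith
        have hesc : ∀ t, 1 ≤ t → f^[t] 0 ≠ 0 ∧ (f^[t] 0).valuation ≤ w := by
          intro t
          induction t with
          | zero => intro h; exact absurd h (by omega)
          | succ s ih =>
            intro _
            rcases Nat.eq_zero_or_pos s with rfl | hs
            · rw [show (0:ℕ) + 1 = 1 from rfl, Function.iterate_one, hf0]
              exact ⟨hC0, le_refl _⟩
            · obtain ⟨hz, hzv⟩ := ih hs
              have hzneg : (f^[s] 0).valuation < 0 := by omega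
              have hBKz := BK_val_neg hkd hkp hrk hpd hnd hz hzneg
              have hprod : A * BK p d k (f^[s] 0) ≠ 0 := mul_ne_zero hA0 hBKz.1
              set mz : ℤ := (f^[s] 0).valuation with hmz
              have hprodval : (A * BK p d k (f^[s] 0)).valuation
                  = v + ((d : ℤ) * mz + min E ((r : ℤ) * (-mz))) := by
                rw [Padic.valuation_mul hA0 hBKz.1, hBKz.2, ← hv, ← hE]
              have hless : (A * BK p d k (f^[s] 0)).valuation < w := by
                rw [hprodval]
                have h1 : min E ((r:ℤ) * (-mz)) ≤ min E ((r:ℤ) * (-w)) + (r:ℤ) * (w - mz) := by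
                  have e2 : (0:ℤ) ≤ (r:ℤ) * (w - mz) := mul_nonneg (by positivity) (by omega)
                  rcases le_total E ((r:ℤ) * (-w)) with h | h
                  · rw [min_eq_left h]
                    have := min_le_left E ((r:ℤ) * (-mz))
                    linarith
                  · rw [min_eq_right h]
                    have h3 : min E ((r:ℤ) * (-mz)) ≤ (r:ℤ) * (-mz) := min_le_right _ _
                    have e1 : (r:ℤ) * (-mz) = (r:ℤ) * (-w) + (r:ℤ) * (w - mz) := by ring
                    linarith
                have h2 : (d:ℤ) * (mz - w) ≤ (r:ℤ) * (mz - w) + (mz - w) := by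
                  have h4 : ((d:ℤ) - r - 1) * (mz - w) ≤ 0 :=
                    mul_nonpos_iff.mpr (Or.inl ⟨by omega, by omega⟩)
                  linarith only [h4]
                linarith only [hGw, h1, h2, hzv]
              have hfzval := PCFAux2.valuation_add_left hprod
                (Or.inr ⟨hC0, by rw [← hwdef]; exact hless⟩)
              constructor
              · rw [Function.iterate_succ_apply', hfBK]
                exact hfzval.1
              · rw [Function.iterate_succ_apply', hfBK, hfzval.2]
                exact hless.le
        exact (hesc n hn).1 hit0
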